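/- Let λ > 0 and p(n) ~ λ/n^d. For every ε > 0, δ > 0, and r ∈ ℕ, the probability that there exists a vertex v_0 in G^{d+1}(n,p) whose ball B(v_0, r) of radius r (in the hypergraph distance) contains more than ε n^δ vertices tends to 0 as n → ∞. -/

import Mathlib

open Finset Filter Asymptotics

noncomputable section
open scoped Classical

/-- The type of potential edges of a `(d+1)`-uniform hypergraph on `n` vertices. -/
abbrev Edge (d n : ℕ) := {s : Finset (Fin n) // s.card = d + 1}

/-- Probability of an event in the binomial random `(d+1)`-uniform hypergraph `G^{d+1}(n,p)`. -/
def hprob (d n : ℕ) (p : ℝ) (P : Finset (Edge d n) → Prop) : ℝ :=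
  ∑ H : Finset (Edge d n),
    if P H then p ^ H.card * (1 - p) ^ (Fintype.card (Edge d n) - H.card) else 0

/-- Expectation of a random variable on `G^{d+1}(n,p)`. -/
def hexp (d n : ℕ) (p : ℝ) (X : Finset (Edge d n) → ℝ) : ℝ :=
  ∑ H : Finset (Edge d n),
    p ^ H.card * (1 - p) ^ (Fintype.card (Edge d n) - H.card) * X H

/-- Two vertices are adjacent if they are distinct and share an edge. -/
def eadj {d n : ℕ} (H : Finset (Edge d n)) (x y : Fin n) : Prop :=
  x ≠ y ∧ ∃ e ∈ H, x ∈ e.1 ∧ y ∈ e.1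

/-- The connected component of a vertex, as a finset. -/
def ecomp {d n : ℕ} (H : Finset (Edge d n)) (x : Fin n) : Finset (Fin n) :=
  Finset.univ.filter fun y => Relation.ReflTransGen (eadj H) x y

/-- The hypergraph is connected. -/
def econn {d n : ℕ} (H : Finset (Edge d n)) : Prop :=
  ∀ x y : Fin n, Relation.ReflTransGen (eadj H) x y

/-- The incidence graph of a hypergraph (a bipartite graph between vertices and edges);
Berge-acyclicity means this graph is acyclic. -/
def einc {d n : ℕ} (H : Finset (Edge d n)) : SimpleGraph (Fin n ⊕ Edge d n) where
  Adj a b := (∃ v e, a = Sum.inl v ∧ b = Sum.inr e ∧ e ∈ H ∧ v ∈ e.1) ∨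
             (∃ v e, b = Sum.inl v ∧ a = Sum.inr e ∧ e ∈ H ∧ v ∈ e.1)
  symm := ⟨fun a b h => h.symm⟩
  loopless := ⟨by rintro a (⟨v, e, rfl, h2, -⟩ | ⟨v, e, rfl, h2, -⟩) <;> simp at h2⟩

/-- The image of an edge under an injection of vertex sets. -/
def mapEdge {d v n : ℕ} (f : Fin v ↪ Fin n) (e : Edge d v) : Edge d n :=
  ⟨e.1.map f, by rw [Finset.card_map]; exact e.2⟩

/-- A butterfly of order `l`: a connected Berge-acyclic `(d+1)`-uniform hypergraph with `l`
edges, on its `1 + l*d` vertices. -/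
def IsButterfly (d l : ℕ) (K : Finset (Edge d (1 + l * d))) : Prop :=
  K.card = l ∧ (∀ x y : Fin (1 + l * d), Relation.ReflTransGen (eadj K) x y) ∧
    (einc K).IsAcyclic

/-- The degree of a vertex: the number of edges containing it. -/
def edeg {d n : ℕ} (H : Finset (Edge d n)) (x : Fin n) : ℕ :=
  (H.filter fun e => x ∈ e.1).card

/-- `f` embeds `K` as a connected-component copy in `H`: all edges of `K` are present
and no edge of `H` meets the image except images of edges of `K`. -/
def IsCompCopy {d v n : ℕ} (K : Finset (Edge d v)) (H : Finset (Edge d n))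
    (f : Fin v ↪ Fin n) : Prop :=
  (∀ e ∈ K, mapEdge f e ∈ H) ∧
    ∀ e ∈ H, (∃ i, f i ∈ e.1) → ∃ e' ∈ K, e = mapEdge f e'

/-- The number of connected components of `H` isomorphic to `K`. -/
def numCompCopies {d v n : ℕ} (K : Finset (Edge d v)) (H : Finset (Edge d n)) : ℕ :=
  ((Finset.univ : Finset (Finset (Fin n))).filter fun s =>
    ∃ f : Fin v ↪ Fin n, IsCompCopy K H f ∧ Finset.univ.map f = s).card

/-- Two hypergraphs on the same labelled vertex set are isomorphic. -/
def EquivHyper {d v : ℕ} (K K' : Finset (Edge d v)) : Prop :=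
  ∃ g : Fin v ≃ Fin v, ∀ e : Edge d v, e ∈ K ↔ mapEdge g.toEmbedding e ∈ K'

/-- The number of hypergraphs on `v` labelled vertices isomorphic to `K`. -/
def countType {d v : ℕ} (K : Finset (Edge d v)) : ℕ :=
  ((Finset.univ : Finset (Finset (Edge d v))).filter fun K' => EquivHyper K' K).card

/-- The number of vertices of the largest connected component. -/
def giantSize {d n : ℕ} (H : Finset (Edge d n)) : ℕ :=
  Finset.univ.sup fun x : Fin n => (ecomp H x).card

/-- `μ`: the number of vertices outside the largest connected component. -/
def mu {d n : ℕ} (H : Finset (Edge d n)) : ℕ := n - giantSize H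

/-- An edge of a Berge-acyclic hypergraph is a leaf if it is incident to exactly one
other edge. -/
def IsLeaf {d v : ℕ} (K : Finset (Edge d v)) (e : Edge d v) : Prop :=
  e ∈ K ∧ (K.filter fun e' => e' ≠ e ∧ (e'.1 ∩ e.1).Nonempty).card = 1

/-- A `v*`-marked `l`-butterfly `(K, M)` is minimal if every leaf edge contains a marked
vertex. -/
def IsMinimalMarked {d v : ℕ} (K : Finset (Edge d v)) (M : Finset (Fin v)) : Prop :=
  ∀ e ∈ K, IsLeaf K e → ∃ x ∈ e.1, x ∈ M

/-- The number of copies of the marked butterfly `(K, M)` in `H`: not-necessarily-induced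
sub-hypergraphs isomorphic to `K` in which each marked vertex has the same degree in `H`
as in `K`. Copies are counted by their (edge set, marked vertex set) pair. -/
def numMarkedCopies {d v n : ℕ} (K : Finset (Edge d v)) (M : Finset (Fin v))
    (H : Finset (Edge d n)) : ℕ :=
  Set.ncard {q : Finset (Edge d n) × Finset (Fin n) |
    ∃ f : Fin v ↪ Fin n, (∀ e ∈ K, mapEdge f e ∈ H) ∧
      (∀ x ∈ M, edeg H (f x) = edeg K x) ∧
      q.1 = K.image (mapEdge f) ∧ q.2 = M.map f}

/-- Two marked hypergraphs on the same labelled vertex set are isomorphic. -/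
def EquivMarked {d v : ℕ} (K K' : Finset (Edge d v)) (M M' : Finset (Fin v)) : Prop :=
  ∃ g : Fin v ≃ Fin v, (∀ e : Edge d v, e ∈ K ↔ mapEdge g.toEmbedding e ∈ K') ∧
    M.map g.toEmbedding = M'

/-- The number of marked hypergraphs on `v` labelled vertices isomorphic to `(K, M)`. -/
def countMarkedType {d v : ℕ} (K : Finset (Edge d v)) (M : Finset (Fin v)) : ℕ :=
  ((Finset.univ : Finset (Finset (Edge d v) × Finset (Fin v))).filter fun q =>
    EquivMarked q.1 K q.2 M).card

/-- The ball of radius `r` around a vertex in the hypergraph distance. -/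
def hball {d n : ℕ} (H : Finset (Edge d n)) (x : Fin n) : ℕ → Finset (Fin n)
  | 0 => {x}
  | r + 1 => hball H x r ∪ Finset.univ.filter fun y => ∃ z ∈ hball H x r, eadj H z y

section helpers

variable {d n : ℕ} {p : ℝ}

lemma weight_nonneg (hp0 : 0 ≤ p) (hp1 : p ≤ 1) (H : Finset (Edge d n)) :
    0 ≤ p ^ H.card * (1 - p) ^ (Fintype.card (Edge d n) - H.card) :=
  mul_nonneg (pow_nonneg hp0 _) (pow_nonneg (by linarith) _)

lemma hprob_nonneg (hp0 : 0 ≤ p) (hp1 : p ≤ 1) (P : Finset (Edge d n) → Prop) :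
    0 ≤ hprob d n p P := by
  apply Finset.sum_nonneg
  intro H _
  split
  · exact weight_nonneg hp0 hp1 H
  · exact le_rfl

lemma hprob_mono (hp0 : 0 ≤ p) (hp1 : p ≤ 1) {P Q : Finset (Edge d n) → Prop}
    (h : ∀ H, P H → Q H) : hprob d n p P ≤ hprob d n p Q := by
  apply Finset.sum_le_sum
  intro H _
  by_cases hP : P H
  · rw [if_pos hP, if_pos (h H hP)]
  · rw [if_neg hP]
    split
    · exact weight_nonneg hp0 hp1 H
    · exact le_rfl

lemma hprob_or_le (hp0 : 0 ≤ p) (hp1 : p ≤ 1) (P Q : Finset (Edge d n) → Prop) :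
    hprob d n p (fun H => P H ∨ Q H) ≤ hprob d n p P + hprob d n p Q := by
  unfold hprob
  rw [← Finset.sum_add_distrib]
  apply Finset.sum_le_sum
  intro H _
  have hw := weight_nonneg hp0 hp1 H
  by_cases hP : P H <;> by_cases hQ : Q H
  · rw [if_pos (Or.inl hP), if_pos hP, if_pos hQ]; linarith
  · rw [if_pos (Or.inl hP), if_pos hP, if_neg hQ, add_zero]
  · rw [if_pos (Or.inr hQ), if_neg hP, if_pos hQ, zero_add]
  · rw [if_neg (by tauto), if_neg hP, if_neg hQ, add_zero]

lemma hprob_exists_le (hp0 : 0 ≤ p) (hp1 : p ≤ 1) {ι : Type*} (s : Finset ι)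
    (P : ι → Finset (Edge d n) → Prop) :
    hprob d n p (fun H => ∃ i ∈ s, P i H) ≤ ∑ i ∈ s, hprob d n p (P i) := by
  classical
  induction s using Finset.induction_on with
  | empty =>
      simp only [Finset.notMem_empty, false_and, exists_false, Finset.sum_empty]
      apply le_of_eq
      unfold hprob
      simp
  | @insert a s ha ih =>
      rw [Finset.sum_insert ha]
      calc hprob d n p (fun H => ∃ i ∈ insert a s, P i H)
          ≤ hprob d n p (fun H => P a H ∨ ∃ i ∈ s, P i H) := by
            apply hprob_mono hp0 hp1
            intro H hH
            obtain ⟨i, hi, hPi⟩ := hH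
            rcases Finset.mem_insert.1 hi with rfl | hi
            · exact Or.inl hPi
            · exact Or.inr ⟨i, hi, hPi⟩
        _ ≤ hprob d n p (P a) + hprob d n p (fun H => ∃ i ∈ s, P i H) :=
            hprob_or_le hp0 hp1 _ _
        _ ≤ _ := by gcongr

lemma sum_pow_powerset {α : Type*} [DecidableEq α] (u : Finset α) (a b : ℝ) :
    ∑ T ∈ u.powerset, a ^ T.card * b ^ (u.card - T.card) = (a + b) ^ u.card := by
  calc ∑ T ∈ u.powerset, a ^ T.card * b ^ (u.card - T.card)
      = ∑ m ∈ Finset.range (u.card + 1), u.card.choose m • (a ^ m * b ^ (u.card - m)) :=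
        Finset.sum_powerset_apply_card (fun m => a ^ m * b ^ (u.card - m))
    _ = (a + b) ^ u.card := by
        rw [add_pow]
        exact Finset.sum_congr rfl fun m _ => by rw [nsmul_eq_mul]; ring

lemma hprob_eq_sum_filter (P : Finset (Edge d n) → Prop) [DecidablePred P] :
    hprob d n p P = ∑ H ∈ Finset.univ.filter P,
      p ^ H.card * (1 - p) ^ (Fintype.card (Edge d n) - H.card) :=
  (Finset.sum_congr rfl fun H _ => by congr).trans
    (Finset.sum_filter _ _).symm

lemma hprob_superset (S : Finset (Edge d n)) :
    hprob d n p (fun H => S ⊆ H) = p ^ S.card := by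
  classical
  rw [hprob_eq_sum_filter]
  rw [Finset.sum_nbij' (i := fun H => H \ S) (j := fun T => S ∪ T)
    (t := Sᶜ.powerset)
    (g := fun T => p ^ (S ∪ T).card * (1 - p) ^ (Fintype.card (Edge d n) - (S ∪ T).card))
    ?_ ?_ ?_ ?_ ?_]
  · have key : ∀ T ∈ Sᶜ.powerset,
        p ^ (S ∪ T).card * (1 - p) ^ (Fintype.card (Edge d n) - (S ∪ T).card)
          = p ^ S.card * (p ^ T.card * (1 - p) ^ (Sᶜ.card - T.card)) := by
      intro T hT
      rw [Finset.mem_powerset] at hT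
      have hdisj : Disjoint S T := by
        rw [Finset.disjoint_left]
        intro x hx hx'
        exact (Finset.mem_compl.1 (hT hx')) hx
      rw [Finset.card_union_of_disjoint hdisj, pow_add, Finset.card_compl,
        Nat.sub_sub, mul_assoc]
    rw [Finset.sum_congr rfl key, ← Finset.mul_sum, sum_pow_powerset]
    norm_num
  · intro H hH
    rw [Finset.mem_filter] at hH
    rw [Finset.mem_powerset]
    intro x hx
    rw [Finset.mem_sdiff] at hx
    exact Finset.mem_compl.2 hx.2
  · intro T hT
    simp only [Finset.mem_filter, Finset.mem_univ, true_and]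
    exact Finset.subset_union_left
  · intro H hH
    rw [Finset.mem_filter] at hH
    exact Finset.union_sdiff_of_subset hH.2
  · intro T hT
    rw [Finset.mem_powerset] at hT
    apply Finset.union_sdiff_cancel_left
    rw [Finset.disjoint_left]
    intro x hx hx'
    exact (Finset.mem_compl.1 (hT hx')) hx
  · intro H hH
    rw [Finset.mem_filter] at hH
    beta_reduce
    rw [Finset.union_sdiff_of_subset hH.2]

end helpers

lemma card_edges_containing (x : Fin n) :
    (Finset.univ.filter fun e : Edge d n => x ∈ e.1).card ≤ n ^ d := by
  have h1 : (Finset.univ.filter fun e : Edge d n => x ∈ e.1).card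
      ≤ (Finset.powersetCard d (Finset.univ : Finset (Fin n))).card := by
    apply Finset.card_le_card_of_injOn (fun e => e.1.erase x)
    · intro e he
      rw [Finset.mem_coe, Finset.mem_filter] at he
      rw [Finset.mem_coe, Finset.mem_powersetCard]
      refine ⟨Finset.subset_univ _, ?_⟩
      rw [Finset.card_erase_of_mem he.2, e.2]
      omega
    · intro e he e' he' h
      rw [Finset.mem_coe, Finset.mem_filter] at he he'
      apply Subtype.ext
      rw [← Finset.insert_erase he.2, ← Finset.insert_erase he'.2]
      exact congrArg _ h
  rw [Finset.card_powersetCard, Finset.card_univ, Fintype.card_fin] at h1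
  exact h1.trans (Nat.choose_le_pow n d)

lemma hprob_deg_le (hp0 : 0 ≤ p) (hp1 : p ≤ 1) (k : ℕ) :
    hprob d n p (fun H => ∃ x : Fin n, k ≤ edeg H x)
      ≤ (n : ℝ) * (((n : ℝ) ^ d * p) ^ k / (Nat.factorial k : ℝ)) := by
  calc hprob d n p (fun H => ∃ x : Fin n, k ≤ edeg H x)
      ≤ ∑ x : Fin n, hprob d n p (fun H => k ≤ edeg H x) := by
        refine le_trans (hprob_mono hp0 hp1 ?_)
          (hprob_exists_le hp0 hp1 (Finset.univ : Finset (Fin n)) (fun x H => k ≤ edeg H x))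
        rintro H ⟨x, hx⟩
        exact ⟨x, Finset.mem_univ x, hx⟩
    _ ≤ ∑ _x : Fin n, (((n : ℝ) ^ d * p) ^ k / (Nat.factorial k : ℝ)) := by
        apply Finset.sum_le_sum
        intro x _
        calc hprob d n p (fun H => k ≤ edeg H x)
            ≤ ∑ S ∈ Finset.powersetCard k (Finset.univ.filter fun e : Edge d n => x ∈ e.1),
                hprob d n p (fun H => S ⊆ H) := by
              refine le_trans (hprob_mono hp0 hp1 ?_) (hprob_exists_le hp0 hp1 _ _)
              intro H hH
              obtain ⟨S, hS, hcard⟩ := Finset.exists_subset_card_eq hH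
              refine ⟨S, Finset.mem_powersetCard.2 ⟨fun e he => ?_, hcard⟩,
                fun e he => (Finset.mem_filter.1 (hS he)).1⟩
              exact Finset.mem_filter.2 ⟨Finset.mem_univ _, (Finset.mem_filter.1 (hS he)).2⟩
          _ = ((Finset.univ.filter fun e : Edge d n => x ∈ e.1).card.choose k : ℝ) * p ^ k := by
              rw [Finset.sum_congr rfl (fun S hS => by
                rw [hprob_superset, (Finset.mem_powersetCard.1 hS).2]),
                Finset.sum_const, Finset.card_powersetCard, nsmul_eq_mul]
          _ ≤ ((n : ℝ) ^ d * p) ^ k / (Nat.factorial k : ℝ) := by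
              have h1 : (((Finset.univ.filter fun e : Edge d n => x ∈ e.1).card.choose k : ℕ) : ℝ)
                  ≤ ((n ^ d : ℕ) : ℝ) ^ k / (Nat.factorial k : ℝ) := by
                refine le_trans (Nat.choose_le_pow_div (α := ℝ) k _) ?_
                have hle : (((Finset.univ.filter fun e : Edge d n => x ∈ e.1).card : ℕ) : ℝ)
                    ≤ ((n ^ d : ℕ) : ℝ) := by exact_mod_cast card_edges_containing x
                gcongr
              calc ((Finset.univ.filter fun e : Edge d n => x ∈ e.1).card.choose k : ℝ) * p ^ k
                  ≤ (((n ^ d : ℕ) : ℝ) ^ k / (Nat.factorial k : ℝ)) * p ^ k :=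
                    mul_le_mul_of_nonneg_right h1 (pow_nonneg hp0 k)
                _ = ((n : ℝ) ^ d * p) ^ k / (Nat.factorial k : ℝ) := by
                    push_cast
                    rw [mul_pow]
                    ring
    _ = (n : ℝ) * (((n : ℝ) ^ d * p) ^ k / (Nat.factorial k : ℝ)) := by
        rw [Finset.sum_const, Finset.card_univ, Fintype.card_fin, nsmul_eq_mul]

lemma card_hball_le (H : Finset (Edge d n)) (x : Fin n) (k : ℕ)
    (hdeg : ∀ y, edeg H y ≤ k) : ∀ r, (hball H x r).card ≤ (1 + d * k) ^ r := by
  intro r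
  induction r with
  | zero => simp [hball]
  | succ r ih =>
      have hsub : hball H x (r + 1) ⊆ (hball H x r).biUnion
          (fun z => insert z (Finset.univ.filter fun y => eadj H z y)) := by
        intro y hy
        rw [show hball H x (r + 1) = hball H x r ∪
            Finset.univ.filter (fun y => ∃ z ∈ hball H x r, eadj H z y) from rfl] at hy
        rcases Finset.mem_union.1 hy with hy | hy
        · exact Finset.mem_biUnion.2 ⟨y, hy, Finset.mem_insert_self _ _⟩
        · obtain ⟨z, hz, hadj⟩ := (Finset.mem_filter.1 hy).2
          exact Finset.mem_biUnion.2 ⟨z, hz, Finset.mem_insert.2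
            (Or.inr (Finset.mem_filter.2 ⟨Finset.mem_univ _, hadj⟩))⟩
      calc (hball H x (r + 1)).card
          ≤ ∑ z ∈ hball H x r, (insert z (Finset.univ.filter fun y => eadj H z y)).card :=
            le_trans (Finset.card_le_card hsub) Finset.card_biUnion_le
        _ ≤ ∑ _z ∈ hball H x r, (1 + d * k) := by
            apply Finset.sum_le_sum
            intro z _
            refine le_trans (Finset.card_insert_le _ _) ?_
            have h2 : (Finset.univ.filter fun y => eadj H z y)
                ⊆ (H.filter fun e => z ∈ e.1).biUnion fun e => e.1.erase z := by
              intro y hy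
              obtain ⟨hzy, e, he, hze, hye⟩ := (Finset.mem_filter.1 hy).2
              exact Finset.mem_biUnion.2 ⟨e, Finset.mem_filter.2 ⟨he, hze⟩,
                Finset.mem_erase.2 ⟨Ne.symm hzy, hye⟩⟩
            have h3 : (Finset.univ.filter fun y => eadj H z y).card ≤ k * d := by
              refine le_trans (Finset.card_le_card h2) (le_trans Finset.card_biUnion_le ?_)
              calc ∑ e ∈ H.filter (fun e => z ∈ e.1), (e.1.erase z).card
                  = ∑ _e ∈ H.filter (fun e => z ∈ e.1), d := by
                    refine Finset.sum_congr rfl fun e he => ?_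
                    rw [Finset.card_erase_of_mem (Finset.mem_filter.1 he).2, e.2]
                    omega
                _ = edeg H z * d := by rw [Finset.sum_const, smul_eq_mul]; rfl
                _ ≤ k * d := Nat.mul_le_mul_right d (hdeg z)
            have : k * d = d * k := Nat.mul_comm k d
            omega
        _ = (hball H x r).card * (1 + d * k) := by rw [Finset.sum_const, smul_eq_mul]
        _ ≤ (1 + d * k) ^ r * (1 + d * k) := Nat.mul_le_mul_right _ ih
        _ = (1 + d * k) ^ (r + 1) := (pow_succ _ _).symm

lemma pow_mul_two_pow_le {C : ℝ} (hC : 0 < C) {K : ℕ} (hK : 2 * C ≤ K) :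
    ∀ m : ℕ, C ^ (K + m) * 2 ^ m * (Nat.factorial K : ℝ)
      ≤ C ^ K * (Nat.factorial (K + m) : ℝ) := by
  intro m
  induction m with
  | zero => simp
  | succ m ih =>
      have h1 : C ^ (K + (m + 1)) * 2 ^ (m + 1) * ((Nat.factorial K : ℕ) : ℝ)
          = (2 * C) * (C ^ (K + m) * 2 ^ m * ((Nat.factorial K : ℕ) : ℝ)) := by ring
      rw [h1]
      have hC2 : (0 : ℝ) ≤ 2 * C := by linarith
      calc (2 * C) * (C ^ (K + m) * 2 ^ m * ((Nat.factorial K : ℕ) : ℝ))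
          ≤ (2 * C) * (C ^ K * ((Nat.factorial (K + m) : ℕ) : ℝ)) :=
            mul_le_mul_of_nonneg_left ih hC2
        _ ≤ ((K : ℝ) + m + 1) * (C ^ K * ((Nat.factorial (K + m) : ℕ) : ℝ)) := by
            apply mul_le_mul_of_nonneg_right ?_ (by positivity)
            have : (0:ℝ) ≤ (m : ℝ) := Nat.cast_nonneg m
            linarith
        _ = C ^ K * ((Nat.factorial (K + (m + 1)) : ℕ) : ℝ) := by
            rw [show K + (m + 1) = (K + m) + 1 from rfl, Nat.factorial_succ]
            push_cast
            ring

lemma eventually_log_pow_le {a b ε δ : ℝ} (ha : 0 ≤ a) (hb : 0 ≤ b) (hε : 0 < ε)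
    (hδ : 0 < δ) (r : ℕ) :
    ∀ᶠ n : ℕ in atTop, (a + b * Real.log n) ^ r ≤ ε * (n : ℝ) ^ δ := by
  have hs : 0 < δ / (2 * ((r : ℝ) + 1)) := by positivity
  set s := δ / (2 * ((r : ℝ) + 1)) with hs_def
  have key : ∀ᶠ x : ℝ in atTop, (a + b * Real.log x) ^ r ≤ ε * x ^ δ := by
    have h1 := (isLittleO_log_rpow_atTop hs).def (c := 1 / (2 * (b + 1))) (by positivity)
    have h2 := (tendsto_rpow_atTop hs).eventually_ge_atTop (2 * a)
    have h3 := (tendsto_rpow_atTop (half_pos hδ)).eventually_ge_atTop (1 / ε)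
    filter_upwards [h1, h2, h3, eventually_ge_atTop (1 : ℝ)] with x hx1 hx2 hx3 hx4
    have hx0 : (0 : ℝ) < x := lt_of_lt_of_le one_pos hx4
    have hlog : 0 ≤ Real.log x := Real.log_nonneg hx4
    have hxs : 0 ≤ x ^ s := Real.rpow_nonneg hx0.le s
    rw [Real.norm_eq_abs, Real.norm_eq_abs, abs_of_nonneg hlog, abs_of_nonneg hxs] at hx1
    have hblog : b * Real.log x ≤ (1 / 2) * x ^ s := by
      calc b * Real.log x ≤ b * (1 / (2 * (b + 1)) * x ^ s) :=
            mul_le_mul_of_nonneg_left hx1 hb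
        _ ≤ (1 / 2) * x ^ s := by
            rw [← mul_assoc]
            apply mul_le_mul_of_nonneg_right ?_ hxs
            rw [mul_one_div, div_le_div_iff₀ (by positivity) (by norm_num)]
            nlinarith
    have hbase : a + b * Real.log x ≤ x ^ s := by linarith
    have hbase0 : 0 ≤ a + b * Real.log x := add_nonneg ha (mul_nonneg hb hlog)
    have hsr : s * r ≤ δ / 2 := by
      rw [hs_def, div_mul_eq_mul_div, div_le_div_iff₀ (by positivity) (by norm_num)]
      have h0r : (0 : ℝ) ≤ r := Nat.cast_nonneg r
      nlinarith
    calc (a + b * Real.log x) ^ r ≤ (x ^ s) ^ r := pow_le_pow_left₀ hbase0 hbase r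
      _ = x ^ (s * r) := by
          rw [← Real.rpow_natCast (x ^ s) r, ← Real.rpow_mul hx0.le]
      _ ≤ x ^ (δ / 2) := Real.rpow_le_rpow_of_exponent_le hx4 hsr
      _ ≤ ε * x ^ δ := by
          have hδeq : x ^ δ = x ^ (δ / 2) * x ^ (δ / 2) := by
            rw [← Real.rpow_add hx0]
            ring_nf
          rw [hδeq]
          have ht : 0 ≤ x ^ (δ / 2) := Real.rpow_nonneg hx0.le _
          have h5 : 1 ≤ x ^ (δ / 2) * ε := (div_le_iff₀ hε).1 hx3
          nlinarith [mul_le_mul_of_nonneg_left h5 ht]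
  exact tendsto_natCast_atTop_atTop.eventually key

/-- Let `λ > 0` and `p ~ λ/n^d`. For every `ε, δ > 0` and `r`, the probability that some
vertex of `G^{d+1}(n,p)` has a ball of radius `r` with more than `ε n^δ` vertices tends
to `0`. -/
theorem stmt_18 (d : ℕ) (lam : ℝ) (hlam : 0 < lam) (p : ℕ → ℝ)
    (hp : ∀ n, 0 ≤ p n ∧ p n ≤ 1)
    (hpl : Tendsto (fun n => p n * (n : ℝ) ^ (d : ℕ)) atTop (nhds lam))
    (ε δ : ℝ) (hε : 0 < ε) (hδ : 0 < δ) (r : ℕ) :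
    Tendsto (fun n => hprob d n (p n)
        fun H => ∃ v₀ : Fin n, ε * (n : ℝ) ^ δ < ((hball H v₀ r).card : ℝ))
      atTop (nhds 0) := by
  set C : ℝ := lam + 1 with hC_def
  have hC0 : 0 < C := by simp only [hC_def]; linarith
  have hC1 : 1 ≤ C := by simp only [hC_def]; linarith
  set K : ℕ := ⌈2 * C⌉₊ with hK_def
  have hK : 2 * C ≤ (K : ℝ) := Nat.le_ceil _
  have hK1 : 1 ≤ K := by
    rcases Nat.eq_zero_or_pos K with h | h
    · exfalso; rw [h] at hK; push_cast at hK; linarith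
    · exact h
  set kf : ℕ → ℕ := fun n => K + 2 * Nat.log 2 n with hkf_def
  set A : ℝ := C ^ K / (Nat.factorial K : ℝ) with hA_def
  -- eventual bound
  have habs : ∀ᶠ n : ℕ in atTop, hprob d n (p n) (fun H => ∃ v₀ : Fin n,
      ε * (n : ℝ) ^ δ < ((hball H v₀ r).card : ℝ)) ≤ (4 * A) / n := by
    have h1 : ∀ᶠ n : ℕ in atTop, (n : ℝ) ^ (d : ℕ) * p n ≤ C := by
      filter_upwards [hpl.eventually_lt_const (show lam < C by simp only [hC_def]; linarith)]
        with n hn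
      calc (n : ℝ) ^ (d : ℕ) * p n = p n * (n : ℝ) ^ (d : ℕ) := mul_comm _ _
        _ ≤ C := hn.le
    have h2 : ∀ᶠ n : ℕ in atTop,
        ((1 + d * (kf n - 1) : ℕ) : ℝ) ^ r ≤ ε * (n : ℝ) ^ δ := by
      have hmain := eventually_log_pow_le (a := 1 + (d : ℝ) * K) (b := 4 * d)
        (by positivity) (by positivity) hε hδ r
      filter_upwards [hmain, eventually_ge_atTop 1] with n hn hn1
      refine le_trans (pow_le_pow_left₀ (Nat.cast_nonneg _) ?_ r) hn
      have hnat : (1 + d * (kf n - 1) : ℕ) ≤ 1 + d * K + d * (2 * Nat.log 2 n) := by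
        have : kf n - 1 ≤ K + 2 * Nat.log 2 n := by simp only [hkf_def]; omega
        calc 1 + d * (kf n - 1) ≤ 1 + d * (K + 2 * Nat.log 2 n) := by
              exact Nat.add_le_add_left (Nat.mul_le_mul_left d this) 1
          _ = 1 + d * K + d * (2 * Nat.log 2 n) := by ring
      have hlogle : ((Nat.log 2 n : ℕ) : ℝ) ≤ 2 * Real.log n := by
        refine le_trans (Real.natLog_le_logb n 2) ?_
        rw [Real.logb, div_le_iff₀ (Real.log_pos (by norm_num))]
        have hlogn : 0 ≤ Real.log n := Real.log_nonneg (by exact_mod_cast hn1)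
        push_cast
        nlinarith [Real.log_two_gt_d9]
      calc ((1 + d * (kf n - 1) : ℕ) : ℝ)
          ≤ ((1 + d * K + d * (2 * Nat.log 2 n) : ℕ) : ℝ) := by exact_mod_cast hnat
        _ ≤ 1 + (d : ℝ) * K + 4 * d * Real.log n := by
            push_cast
            nlinarith [mul_le_mul_of_nonneg_left hlogle
              (show (0:ℝ) ≤ 2 * (d : ℝ) by positivity)]
    filter_upwards [h1, h2, eventually_ge_atTop 1] with n hn1 hn2 hn3
    have hp0 := (hp n).1
    have hp1 := (hp n).2
    have hnR : (1 : ℝ) ≤ (n : ℝ) := by exact_mod_cast hn3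
    have hnR0 : (0 : ℝ) < (n : ℝ) := by linarith
    calc hprob d n (p n) (fun H => ∃ v₀ : Fin n,
          ε * (n : ℝ) ^ δ < ((hball H v₀ r).card : ℝ))
        ≤ hprob d n (p n) (fun H => ∃ x : Fin n, kf n ≤ edeg H x) := by
          apply hprob_mono hp0 hp1
          rintro H ⟨v₀, hv⟩
          by_contra hcon
          push_neg at hcon
          have hdeg : ∀ y, edeg H y ≤ kf n - 1 := fun y => Nat.le_sub_one_of_lt (hcon y)
          have hcard := card_hball_le H v₀ (kf n - 1) hdeg r
          have hcast : ((hball H v₀ r).card : ℝ) ≤ ((1 + d * (kf n - 1) : ℕ) : ℝ) ^ r := by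
            exact_mod_cast hcard
          linarith
      _ ≤ (n : ℝ) * (((n : ℝ) ^ d * p n) ^ (kf n) / (Nat.factorial (kf n) : ℝ)) :=
          hprob_deg_le hp0 hp1 (kf n)
      _ ≤ (n : ℝ) * (C ^ (kf n) / (Nat.factorial (kf n) : ℝ)) := by
          have hb0 : 0 ≤ (n : ℝ) ^ d * p n := mul_nonneg (by positivity) hp0
          gcongr
      _ ≤ (4 * A) / n := by
          set L : ℕ := Nat.log 2 n with hL_def
          set m : ℕ := 2 * L with hm_def
          have hkfn : kf n = K + m := rfl
          have key := pow_mul_two_pow_le hC0 hK m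
          have hn2pow : (n : ℝ) * (n : ℝ) ≤ 4 * 2 ^ m := by
            have := Nat.lt_pow_succ_log_self (by norm_num : 1 < 2) n
            have hcast : (n : ℝ) < 2 ^ (L + 1) := by exact_mod_cast this
            have h2L : (2 : ℝ) ^ (L + 1) = 2 * 2 ^ L := by ring
            have h2m : (2 : ℝ) ^ m = 2 ^ L * 2 ^ L := by
              rw [hm_def, two_mul, pow_add]
            have h2L0 : (0 : ℝ) ≤ 2 ^ L := by positivity
            nlinarith
          rw [hkfn]
          rw [hA_def, mul_div_assoc', div_le_div_iff₀ (by positivity) hnR0,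
            show 4 * (C ^ K / (Nat.factorial K : ℝ)) * ((Nat.factorial (K + m) : ℝ))
              = 4 * C ^ K * ((Nat.factorial (K + m) : ℝ)) / (Nat.factorial K : ℝ) by ring,
            le_div_iff₀ (by positivity : (0:ℝ) < (Nat.factorial K : ℝ))]
          have hfpos : (0 : ℝ) ≤ C ^ (K + m) * (Nat.factorial K : ℝ) := by positivity
          have e1 : (n : ℝ) * (n : ℝ) * (C ^ (K + m) * (Nat.factorial K : ℝ))
              ≤ 4 * 2 ^ m * (C ^ (K + m) * (Nat.factorial K : ℝ)) :=
            mul_le_mul_of_nonneg_right hn2pow hfpos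
          have e2 : 4 * (C ^ (K + m) * 2 ^ m * (Nat.factorial K : ℝ))
              ≤ 4 * (C ^ K * (Nat.factorial (K + m) : ℝ)) := by linarith
          nlinarith [e1, e2]
  refine squeeze_zero' ?_ habs ?_
  · exact Eventually.of_forall fun n => hprob_nonneg (hp n).1 (hp n).2 _
  · exact tendsto_const_div_atTop_nhds_zero_nat (4 * A)

end
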